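/- Suppose dim_ℂ R = 2n. Then for Q ∈ S ⊗ R one has β(Q, Q) = 0 if and only if there exist s₁, …, s_n ∈ S and r₁, …, r_n ∈ R with ω(r_i, r_j) = 0 for all i, j such that Q = Σ_{i=1}^n s_i ⊗ r_i. In particular every square-zero supercharge of the N=(n,0) supertranslation algebra has rank at most n, with its R-symmetry components spanning an ω-isotropic subspace. -/

import Mathlib

open TensorProduct ExteriorAlgebra

/-- The wedge `s ∧ t` as an element of the second exterior power `⋀[ℂ]^2 S`. -/
noncomputable def wedge {S : Type} [AddCommGroup S] [Module ℂ S] (s t : S) : ⋀[ℂ]^2 S :=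
  ⟨ι ℂ s * ι ℂ t, by
    show _ ∈ LinearMap.range (ι ℂ : S →ₗ[ℂ] ExteriorAlgebra ℂ S) ^ 2
    rw [pow_two]
    exact Submodule.mul_mem_mul (LinearMap.mem_range_self _ s) (LinearMap.mem_range_self _ t)⟩

section aux
variable {S : Type} [AddCommGroup S] [Module ℂ S]

noncomputable def bilinAlt (φ ψ : S →ₗ[ℂ] ℂ) : S [⋀^Fin 2]→ₗ[ℂ] ℂ where
  toMultilinearMap := LinearMap.uncurryLeft
    (φ.smulRight (MultilinearMap.ofSubsingleton ℂ S ℂ 0 ψ)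
      - ψ.smulRight (MultilinearMap.ofSubsingleton ℂ S ℂ 0 φ))
  map_eq_zero_of_eq' := by
    intro v i j hv hij
    have h01 : v 0 = v 1 := by
      fin_cases i <;> fin_cases j <;> simp_all
    simp [Fin.tail, h01, smul_eq_mul, mul_comm]

lemma bilinAlt_apply (φ ψ : S →ₗ[ℂ] ℂ) (x y : S) :
    bilinAlt φ ψ ![x, y] = φ x * ψ y - ψ x * φ y := by
  simp [bilinAlt, Fin.tail, smul_eq_mul]

noncomputable def fam (φ ψ : S →ₗ[ℂ] ℂ) : ∀ i : ℕ, S [⋀^Fin i]→ₗ[ℂ] ℂ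
  | 2 => bilinAlt φ ψ
  | _ => 0

noncomputable def F2 (φ ψ : S →ₗ[ℂ] ℂ) : (⋀[ℂ]^2 S) →ₗ[ℂ] ℂ :=
  (liftAlternating (fam φ ψ)).comp (Submodule.subtype _)

lemma F2_wedge (φ ψ : S →ₗ[ℂ] ℂ) (s t : S) :
    F2 φ ψ (wedge s t) = φ s * ψ t - ψ s * φ t := by
  have h : F2 φ ψ (wedge s t) = liftAlternating (fam φ ψ) (ι ℂ s * ι ℂ t) := rfl
  rw [h, liftAlternating_ι_mul, liftAlternating_ι]
  show (fam φ ψ 2).curryLeft s ![t] = _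
  rw [show fam φ ψ 2 = bilinAlt φ ψ from rfl, AlternatingMap.curryLeft_apply_apply]
  exact bilinAlt_apply φ ψ s t

end aux
section aux2
variable {S R : Type} [AddCommGroup S] [Module ℂ S] [AddCommGroup R] [Module ℂ R]

lemma tensor_decomp {d : ℕ} (b : Module.Basis (Fin d) ℂ S) (Q : S ⊗[ℂ] R) :
    Q = ∑ i, b i ⊗ₜ[ℂ] (TensorProduct.lid ℂ R ((b.coord i).rTensor R Q)) := by
  induction Q using TensorProduct.induction_on with
  | zero => simp
  | tmul s r =>
    simp only [LinearMap.rTensor_tmul, TensorProduct.lid_tmul, Module.Basis.coord_apply]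
    have key : ∀ x : Fin d, b x ⊗ₜ[ℂ] ((b.repr s) x • r) = ((b.repr s) x • b x) ⊗ₜ[ℂ] r :=
      fun x => (TensorProduct.smul_tmul _ _ _).symm
    rw [Finset.sum_congr rfl fun x _ => key x, ← TensorProduct.sum_tmul, Module.Basis.sum_repr]
  | add x y hx hy =>
    simp only [map_add] at *
    conv_lhs => rw [hx, hy]
    rw [← Finset.sum_add_distrib]
    simp [TensorProduct.tmul_add]

lemma isotropic_le [FiniteDimensional ℂ R] (ω : R →ₗ[ℂ] R →ₗ[ℂ] ℂ)
    (hnd : ∀ r : R, (∀ r' : R, ω r r' = 0) → r = 0)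
    (W : Submodule ℂ R) (hW : ∀ x ∈ W, ∀ y ∈ W, ω x y = 0) :
    2 * Module.finrank ℂ W ≤ Module.finrank ℂ R := by
  classical
  set ψ : R →ₗ[ℂ] Module.Dual ℂ W := (W.subtype.dualMap).comp ω with hψ
  have hker : W ≤ LinearMap.ker ψ := by
    intro x hx
    rw [LinearMap.mem_ker]
    ext ⟨y, hy⟩
    exact hW x hx y hy
  have hωinj : Function.Injective ω := by
    rw [← LinearMap.ker_eq_bot]
    refine LinearMap.ker_eq_bot'.mpr fun x hx => hnd x fun r' => by rw [hx]; rfl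
  have hωsurj : Function.Surjective ω :=
    (LinearMap.injective_iff_surjective_of_finrank_eq_finrank
      (Subspace.dual_finrank_eq).symm).mp hωinj
  have hψsurj : Function.Surjective ψ :=
    (LinearMap.dualMap_surjective_of_injective W.injective_subtype).comp hωsurj
  have hr : Module.finrank ℂ (LinearMap.range ψ) = Module.finrank ℂ W := by
    rw [LinearMap.range_eq_top.mpr hψsurj, finrank_top, Subspace.dual_finrank_eq]
  have h1 := LinearMap.finrank_range_add_finrank_ker ψ
  have h2 : Module.finrank ℂ W ≤ Module.finrank ℂ (LinearMap.ker ψ) :=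
    Submodule.finrank_mono hker
  omega

lemma sum_extend {M : Type} [AddCommMonoid M] {m n : ℕ} (h : m ≤ n) (f : Fin m → M) :
    ∑ j : Fin n, (if hj : (j : ℕ) < m then f ⟨j, hj⟩ else 0) = ∑ j : Fin m, f j := by
  classical
  set g : ℕ → M := fun j => if hj : j < m then f ⟨j, hj⟩ else 0 with hg
  have h1 : ∑ j : Fin n, (if hj : (j : ℕ) < m then f ⟨j, hj⟩ else 0) = ∑ j ∈ Finset.range n, g j :=
    Fin.sum_univ_eq_sum_range g n
  have h2 : ∑ j : Fin m, f j = ∑ j ∈ Finset.range m, g j := by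
    rw [← Fin.sum_univ_eq_sum_range g m]
    exact Finset.sum_congr rfl fun j _ => by simp [hg, j.isLt]
  rw [h1, h2]
  exact (Finset.sum_subset (Finset.range_subset_range.mpr h) fun x _ hx => by
    rw [Finset.mem_range] at hx
    simp [hg, hx]).symm

lemma skew (ω : R →ₗ[ℂ] R →ₗ[ℂ] ℂ) (halt : ∀ r : R, ω r r = 0) (x y : R) :
    ω x y = - ω y x := by
  have h := halt (x + y)
  simp only [map_add, LinearMap.add_apply, halt] at h
  linear_combination h
end aux2

/-- If `dim_ℂ R = 2n`, then `Q ∈ S ⊗ R` satisfies `β Q Q = 0` if and only if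
`Q = Σ_{i=1}^n s_i ⊗ r_i` with all `ω (r_i) (r_j) = 0`; i.e. every square-zero supercharge of
the `N=(n,0)` supertranslation algebra has rank at most `n`, with R-symmetry components
spanning an isotropic subspace. -/
theorem square_zero_iff_isotropic_rank_le_n
    {S R : Type} [AddCommGroup S] [Module ℂ S] [FiniteDimensional ℂ S]
    [AddCommGroup R] [Module ℂ R] [FiniteDimensional ℂ R]
    (n : ℕ) (hR : Module.finrank ℂ R = 2 * n)
    (ω : R →ₗ[ℂ] R →ₗ[ℂ] ℂ)
    (halt : ∀ r : R, ω r r = 0)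
    (hnd : ∀ r : R, (∀ r' : R, ω r r' = 0) → r = 0)
    (β : (S ⊗[ℂ] R) →ₗ[ℂ] (S ⊗[ℂ] R) →ₗ[ℂ] ⋀[ℂ]^2 S)
    (hβ : ∀ (s s' : S) (r r' : R),
      β (s ⊗ₜ[ℂ] r) (s' ⊗ₜ[ℂ] r') = ω r r' • wedge s s')
    (Q : S ⊗[ℂ] R) :
    β Q Q = 0 ↔
      ∃ (s : Fin n → S) (r : Fin n → R),
        (∀ i j, ω (r i) (r j) = 0) ∧ Q = ∑ i, s i ⊗ₜ[ℂ] r i := by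
  classical
  constructor
  · intro hQ
    set d := Module.finrank ℂ S with hd
    let b : Module.Basis (Fin d) ℂ S := Module.finBasis ℂ S
    set rQ : Fin d → R := fun i => TensorProduct.lid ℂ R ((b.coord i).rTensor R Q) with hrQ
    have hdec : Q = ∑ i, b i ⊗ₜ[ℂ] rQ i := tensor_decomp b Q
    have hββ : (∑ k, ∑ l, ω (rQ k) (rQ l) • wedge (b k) (b l)) = 0 := by
      rw [← hQ]
      conv_rhs => rw [hdec]
      simp only [map_sum, LinearMap.sum_apply, hβ]
      exact Finset.sum_comm
    have horth : ∀ i j, ω (rQ i) (rQ j) = 0 := by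
      intro i j
      rcases eq_or_ne i j with rfl | hij
      · exact halt _
      · have h0 : (F2 (b.coord i) (b.coord j))
            (∑ k, ∑ l, ω (rQ k) (rQ l) • wedge (b k) (b l)) = 0 := by
          rw [hββ, map_zero]
        rw [map_sum] at h0
        simp only [map_sum, map_smul, F2_wedge, Module.Basis.coord_apply, Module.Basis.repr_self,
          Finsupp.single_apply, smul_eq_mul, mul_sub, mul_ite, ite_mul, mul_one, mul_zero,
          one_mul, zero_mul, Finset.sum_sub_distrib, Finset.sum_ite_eq, Finset.sum_ite_eq',
          Finset.mem_univ, if_true, sub_zero, zero_sub, if_neg hij, if_neg hij.symm] at h0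
        have hsk := skew ω halt (rQ i) (rQ j)
        linear_combination (h0 + hsk) / 2
    let W : Submodule ℂ R := Submodule.span ℂ (Set.range rQ)
    have hmem : ∀ i, rQ i ∈ W := fun i => Submodule.subset_span ⟨i, rfl⟩
    have hWiso : ∀ x ∈ W, ∀ y ∈ W, ω x y = 0 := by
      have h1 : ∀ k, W ≤ LinearMap.ker (ω (rQ k)) := fun k =>
        Submodule.span_le.mpr (by rintro z ⟨l, rfl⟩; exact horth k l)
      intro x hx y hy
      have h2 : W ≤ LinearMap.ker (ω.flip y) := Submodule.span_le.mpr (by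
        rintro z ⟨k, rfl⟩
        exact h1 k hy)
      exact h2 hx
    set m := Module.finrank ℂ W with hm
    have hmn : m ≤ n := by
      have := isotropic_le ω hnd W hWiso
      omega
    let bw : Module.Basis (Fin m) ℂ W := Module.finBasis ℂ W
    set c : Fin d → Fin m → ℂ := fun i j => bw.repr ⟨rQ i, hmem i⟩ j with hc
    have hrW : ∀ i, rQ i = ∑ j : Fin m, c i j • ((bw j : W) : R) := by
      intro i
      have h := bw.sum_repr ⟨rQ i, hmem i⟩
      calc rQ i = ((⟨rQ i, hmem i⟩ : W) : R) := rfl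
        _ = _ := by rw [← h]; push_cast; rfl
    have hQm : Q = ∑ j : Fin m, (∑ i, c i j • b i) ⊗ₜ[ℂ] ((bw j : W) : R) := by
      calc Q = ∑ i, b i ⊗ₜ[ℂ] rQ i := hdec
        _ = ∑ i, ∑ j : Fin m, c i j • (b i ⊗ₜ[ℂ] ((bw j : W) : R)) := by
            refine Finset.sum_congr rfl fun i _ => ?_
            rw [hrW i, TensorProduct.tmul_sum]
            exact Finset.sum_congr rfl fun j _ => TensorProduct.tmul_smul _ _ _
        _ = ∑ j : Fin m, ∑ i, c i j • (b i ⊗ₜ[ℂ] ((bw j : W) : R)) := Finset.sum_comm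
        _ = ∑ j : Fin m, (∑ i, c i j • b i) ⊗ₜ[ℂ] ((bw j : W) : R) := by
            refine Finset.sum_congr rfl fun j _ => ?_
            rw [TensorProduct.sum_tmul]
            exact Finset.sum_congr rfl fun i _ => (TensorProduct.smul_tmul' _ _ _).symm
    refine ⟨fun j => if hj : (j : ℕ) < m then (∑ i, c i ⟨j, hj⟩ • b i) else 0,
           fun j => if hj : (j : ℕ) < m then ((bw ⟨j, hj⟩ : W) : R) else 0, ?_, ?_⟩
    · intro j k
      dsimp only
      split_ifs <;> first
        | exact hWiso _ (bw _).2 _ (bw _).2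
        | simp
    · rw [hQm, ← sum_extend hmn (f := fun j : Fin m => (∑ i, c i j • b i) ⊗ₜ[ℂ] ((bw j : W) : R))]
      refine Finset.sum_congr rfl fun j _ => ?_
      by_cases hj : (j : ℕ) < m
      · simp only [dif_pos hj]
      · simp only [dif_neg hj, TensorProduct.zero_tmul]
  · rintro ⟨s, r, hor, rfl⟩
    simp only [map_sum, LinearMap.sum_apply, hβ, hor, zero_smul, Finset.sum_const_zero]
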